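/- Suppose η̂ > 1/2 + σ̂a₁/(a₂ + 1) and there exists F̄ ∈ (0, 1) with J(F̄) > F̄ + η̂ − 1/2. Then there exist exactly two points F_u < F_h in (0, 1) satisfying J(F) = F + η̂ − 1/2, and moreover G(0) = 0, G(F) < 0 for F ∈ (0, F_u), G(F) > 0 for F ∈ (F_u, F_h), and G(F) < 0 for F ∈ (F_h, 1]. -/

import Mathlib

/-- `J(F) = σ̂·(1 + ξF)·a₁(1 − F)/(a₂(1 − F) + 1)`. -/
noncomputable def Jfun (σ ξ a₁ a₂ F : ℝ) : ℝ :=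
  σ * (1 + ξ * F) * (a₁ * (1 - F)) / (a₂ * (1 - F) + 1)

/-- The right-hand side `G(F) = max{0, min{1, 1/2 − η̂ + J(F)}} − F` of the reduced
single-lake dynamics. -/
noncomputable def Gfun (σ ξ a₁ a₂ η F : ℝ) : ℝ :=
  max 0 (min 1 (1 / 2 - η + Jfun σ ξ a₁ a₂ F)) - F

private lemma qneg_left (A u v t : ℝ) (hA : A < 0) (h1 : t < u) (h2 : t < v) :
    A * (t - u) * (t - v) < 0 := by
  nlinarith [mul_pos (sub_pos.mpr h1) (sub_pos.mpr h2)]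

private lemma qneg_right (A u v t : ℝ) (hA : A < 0) (h1 : u < t) (h2 : v < t) :
    A * (t - u) * (t - v) < 0 := by
  nlinarith [mul_pos (sub_pos.mpr h1) (sub_pos.mpr h2)]

private lemma qpos_mid (A u v t : ℝ) (hA : A < 0) (h1 : u < t) (h2 : t < v) :
    0 < A * (t - u) * (t - v) := by
  nlinarith [mul_pos (sub_pos.mpr h1) (sub_pos.mpr h2)]

private lemma qord (A u v t : ℝ) (hA : A < 0) (huv : u < v)
    (h : 0 < A * (t - u) * (t - v)) : u < t ∧ t < v := by
  constructor
  · by_contra hc; push_neg at hc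
    nlinarith [mul_nonneg (neg_nonneg.mpr hA.le)
      (mul_nonneg (sub_nonneg.mpr hc) (sub_nonneg.mpr (le_of_lt (lt_of_le_of_lt hc huv))))]
  · by_contra hc; push_neg at hc
    nlinarith [mul_nonneg (neg_nonneg.mpr hA.le)
      (mul_nonneg (sub_nonneg.mpr (le_of_lt (lt_of_lt_of_le huv hc))) (sub_nonneg.mpr hc))]

private lemma qzero_pos (A u v : ℝ) (hA : A < 0) (h : A * (0 - u) * (0 - v) < 0)
    (hv : 0 < v) : 0 < u := by
  by_contra hc; push_neg at hc
  nlinarith [mul_nonneg (neg_nonneg.mpr hA.le)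
    (mul_nonneg (sub_nonneg.mpr hc) (sub_nonneg.mpr hv.le))]

private lemma qone (A u v : ℝ) (hA : A < 0) (h : A * (1 - u) * (1 - v) < 0)
    (hu : u < 1) : v < 1 := by
  by_contra hc; push_neg at hc
  nlinarith [mul_nonneg (neg_nonneg.mpr hA.le)
    (mul_nonneg (sub_nonneg.mpr hu.le) (sub_nonneg.mpr hc))]

private lemma sign_transfer_lt (x y D Q : ℝ) (hk : (x - y) * D = Q)
    (hD : 0 < D) (hQ : Q < 0) : x < y := by
  by_contra h; push_neg at h
  nlinarith [mul_nonneg (sub_nonneg.mpr h) hD.le]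

private lemma sign_transfer_gt (x y D Q : ℝ) (hk : (x - y) * D = Q)
    (hD : 0 < D) (hQ : 0 < Q) : y < x := by
  by_contra h; push_neg at h
  nlinarith [mul_nonpos_of_nonpos_of_nonneg (sub_nonpos.mpr h) hD.le]

set_option maxHeartbeats 2000000 in
/-- The bistable case: for `η̂ > 1/2 + σ̂a₁/(a₂ + 1)` with the curve `J` crossing the line
somewhere in `(0,1)`, there are exactly two interior equilibria `F_u < F_h`, and the sign
pattern of `G` makes `0` and `F_h` stable and `F_u` unstable. -/
theorem stmt_10 (σ ξ a₁ a₂ η : ℝ)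
    (hσ : 0 < σ) (hξ : 0 < ξ) (ha₁ : 0 < a₁) (ha₂ : 0 < a₂)
    (hη : 1 / 2 + σ * a₁ / (a₂ + 1) < η)
    (hcross : ∃ Fbar ∈ Set.Ioo (0 : ℝ) 1, Fbar + η - 1 / 2 < Jfun σ ξ a₁ a₂ Fbar) :
    ∃ Fu Fh : ℝ, Fu ∈ Set.Ioo (0 : ℝ) 1 ∧ Fh ∈ Set.Ioo (0 : ℝ) 1 ∧ Fu < Fh ∧
      Jfun σ ξ a₁ a₂ Fu = Fu + η - 1 / 2 ∧
      Jfun σ ξ a₁ a₂ Fh = Fh + η - 1 / 2 ∧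
      (∀ F ∈ Set.Ioo (0 : ℝ) 1, Jfun σ ξ a₁ a₂ F = F + η - 1 / 2 → F = Fu ∨ F = Fh) ∧
      Gfun σ ξ a₁ a₂ η 0 = 0 ∧
      (∀ F ∈ Set.Ioo (0 : ℝ) Fu, Gfun σ ξ a₁ a₂ η F < 0) ∧
      (∀ F ∈ Set.Ioo Fu Fh, 0 < Gfun σ ξ a₁ a₂ η F) ∧
      (∀ F ∈ Set.Ioc Fh (1 : ℝ), Gfun σ ξ a₁ a₂ η F < 0) := by
  obtain ⟨Fb, ⟨hFb0, hFb1⟩, hFbJ⟩ := hcross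
  obtain ⟨A, hA⟩ : ∃ x : ℝ, x = a₂ - σ * a₁ * ξ := ⟨_, rfl⟩
  obtain ⟨B, hB⟩ : ∃ x : ℝ, x = σ * a₁ * (ξ - 1) - (a₂ + 1) + (η - 1/2) * a₂ := ⟨_, rfl⟩
  obtain ⟨CC, hCC⟩ : ∃ x : ℝ, x = σ * a₁ - (η - 1/2) * (a₂ + 1) := ⟨_, rfl⟩
  -- denominator positivity
  have hD : ∀ F : ℝ, F ≤ 1 → 0 < a₂ * (1 - F) + 1 := by
    intro F hF; nlinarith
  -- key polynomial identity
  have key : ∀ F : ℝ, F ≤ 1 →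
      (Jfun σ ξ a₁ a₂ F - (F + η - 1/2)) * (a₂ * (1 - F) + 1) = A * F^2 + B * F + CC := by
    intro F hF
    have hD' : (a₂ * (1 - F) + 1) ≠ 0 := ne_of_gt (hD F hF)
    rw [Jfun, hA, hB, hCC]
    rw [sub_mul, div_mul_cancel₀ _ hD']
    ring
  -- η − 1/2 bound
  have hc : σ * a₁ < (η - 1/2) * (a₂ + 1) := by
    have h1 : σ * a₁ / (a₂ + 1) < η - 1/2 := by linarith
    have h2 : (0:ℝ) < a₂ + 1 := by linarith
    calc σ * a₁ = σ * a₁ / (a₂ + 1) * (a₂ + 1) := by field_simp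
    _ < (η - 1/2) * (a₂ + 1) := by exact mul_lt_mul_of_pos_right h1 h2
  have hCCneg : CC < 0 := by rw [hCC]; linarith
  have hηhalf : (1:ℝ)/2 < η := by
    have : 0 < σ * a₁ / (a₂ + 1) := by positivity
    linarith
  have hsum : A + B + CC = -(1/2 + η) := by rw [hA, hB, hCC]; ring
  have hPFb : 0 < A * Fb^2 + B * Fb + CC := by
    rw [← key Fb hFb1.le]
    exact mul_pos (by linarith) (hD Fb hFb1.le)
  have hAneg : A < 0 := by
    by_contra hA'
    push_neg at hA'
    have hsumFb : (A + B + CC) * Fb = -(1/2 + η) * Fb := by rw [hsum]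
    nlinarith [hPFb, hsumFb, mul_nonneg (mul_nonneg hA' hFb0.le) (sub_nonneg.mpr hFb1.le),
      mul_neg_of_neg_of_pos hCCneg (sub_pos.mpr hFb1),
      mul_pos hFb0 (by linarith : (0:ℝ) < 1/2 + η)]
  have hAne : A ≠ 0 := ne_of_lt hAneg
  have hΔ : 0 < B^2 - 4 * A * CC := by
    nlinarith [sq_nonneg (2 * A * Fb + B), mul_pos (neg_pos.mpr hAneg) hPFb]
  obtain ⟨s, hsdef⟩ : ∃ x : ℝ, x = Real.sqrt (B^2 - 4 * A * CC) := ⟨_, rfl⟩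
  have hs : s^2 = B^2 - 4 * A * CC := by rw [hsdef]; exact Real.sq_sqrt hΔ.le
  have hspos : 0 < s := by rw [hsdef]; exact Real.sqrt_pos.mpr hΔ
  obtain ⟨Fu, hFu⟩ : ∃ x : ℝ, x = (-B + s) / (2 * A) := ⟨_, rfl⟩
  obtain ⟨Fh, hFh⟩ : ∃ x : ℝ, x = (-B - s) / (2 * A) := ⟨_, rfl⟩
  have h2A : (2 * A) ≠ 0 := by
    intro h; nlinarith
  have hfact : ∀ F : ℝ, A * F^2 + B * F + CC = A * (F - Fu) * (F - Fh) := by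
    intro F
    rw [hFu, hFh]
    field_simp
    ring_nf
    linear_combination hs
  have hFuFh : Fu < Fh := by
    have hd : Fu - Fh = s / A := by rw [hFu, hFh]; field_simp; ring
    have : s / A < 0 := div_neg_of_pos_of_neg hspos hAneg
    linarith
  have e0 : A * (0 - Fu) * (0 - Fh) < 0 := by
    rw [← hfact]; simpa using hCCneg
  have eFb : 0 < A * (Fb - Fu) * (Fb - Fh) := by rw [← hfact]; exact hPFb
  have e1 : A * (1 - Fu) * (1 - Fh) < 0 := by
    rw [← hfact]; linarith
  obtain ⟨hFuFb, hFbFh⟩ := qord A Fu Fh Fb hAneg hFuFh eFb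
  have hFu0 : 0 < Fu := qzero_pos A Fu Fh hAneg e0 (lt_trans hFb0 hFbFh)
  have hFh1 : Fh < 1 := qone A Fu Fh hAneg e1 (lt_trans hFuFb hFb1)
  have hFu1 : Fu < 1 := lt_trans hFuFb hFb1
  have hFh0 : 0 < Fh := lt_trans hFu0 hFuFh
  -- roots give equalities for J
  have hroot : ∀ F : ℝ, F ≤ 1 → A * F^2 + B * F + CC = 0 →
      Jfun σ ξ a₁ a₂ F = F + η - 1/2 := by
    intro F hF h0
    have hk := (key F hF).trans h0
    rcases mul_eq_zero.mp hk with h | h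
    · have := sub_eq_zero.mp h; linarith
    · exact absurd h (ne_of_gt (hD F hF))
  have hFuroot : A * Fu^2 + B * Fu + CC = 0 := by rw [hfact]; ring
  have hFhroot : A * Fh^2 + B * Fh + CC = 0 := by rw [hfact]; ring
  -- sign transfer lemmas for J
  have hJlt : ∀ F : ℝ, F ≤ 1 → A * (F - Fu) * (F - Fh) < 0 →
      Jfun σ ξ a₁ a₂ F < F + η - 1/2 := by
    intro F hF hneg
    have hk := key F hF
    rw [hfact F] at hk
    exact sign_transfer_lt _ _ _ _ hk (hD F hF) hneg
  have hJgt : ∀ F : ℝ, F ≤ 1 → 0 < A * (F - Fu) * (F - Fh) →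
      F + η - 1/2 < Jfun σ ξ a₁ a₂ F := by
    intro F hF hpos
    have hk := key F hF
    rw [hfact F] at hk
    exact sign_transfer_gt _ _ _ _ hk (hD F hF) hpos
  -- G sign lemmas
  have hGneg : ∀ F : ℝ, 0 < F → Jfun σ ξ a₁ a₂ F < F + η - 1/2 →
      Gfun σ ξ a₁ a₂ η F < 0 := by
    intro F h0 hJ
    have hu : 1/2 - η + Jfun σ ξ a₁ a₂ F < F := by linarith
    have hm : max 0 (min 1 (1/2 - η + Jfun σ ξ a₁ a₂ F)) < F :=
      max_lt h0 (lt_of_le_of_lt (min_le_right _ _) hu)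
    rw [Gfun]
    linarith
  have hGpos : ∀ F : ℝ, F < 1 → F + η - 1/2 < Jfun σ ξ a₁ a₂ F →
      0 < Gfun σ ξ a₁ a₂ η F := by
    intro F h1 hJ
    have hu : F < 1/2 - η + Jfun σ ξ a₁ a₂ F := by linarith
    have hm : F < min 1 (1/2 - η + Jfun σ ξ a₁ a₂ F) := lt_min h1 hu
    have hm2 : F < max 0 (min 1 (1/2 - η + Jfun σ ξ a₁ a₂ F)) :=
      hm.trans_le (le_max_right _ _)
    rw [Gfun]
    linarith
  -- G(0) = 0
  have hJ0 : Jfun σ ξ a₁ a₂ 0 = σ * a₁ / (a₂ + 1) := by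
    rw [Jfun]; norm_num
  have hG0 : Gfun σ ξ a₁ a₂ η 0 = 0 := by
    have hu0 : 1/2 - η + Jfun σ ξ a₁ a₂ 0 < 0 := by rw [hJ0]; linarith
    rw [Gfun]
    norm_num
    linarith
  refine ⟨Fu, Fh, ⟨hFu0, hFu1⟩, ⟨hFh0, hFh1⟩, hFuFh, ?_, ?_, ?_, hG0, ?_, ?_, ?_⟩
  · have := hroot Fu hFu1.le hFuroot; linarith
  · have := hroot Fh hFh1.le hFhroot; linarith
  · intro F hF heq
    have h0 : A * F^2 + B * F + CC = 0 := by
      rw [← key F hF.2.le]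
      rw [heq]
      ring_nf
    rw [hfact F] at h0
    rcases mul_eq_zero.mp h0 with h | h
    · rcases mul_eq_zero.mp h with h' | h'
      · exact absurd h' (ne_of_lt hAneg)
      · left; linarith [sub_eq_zero.mp h']
    · right; linarith [sub_eq_zero.mp h]
  · intro F ⟨h1, h2⟩
    apply hGneg F h1
    apply hJlt F (by linarith)
    exact qneg_left A Fu Fh F hAneg h2 (lt_trans h2 hFuFh)
  · intro F ⟨h1, h2⟩
    apply hGpos F (by linarith)
    apply hJgt F (by linarith)
    exact qpos_mid A Fu Fh F hAneg h1 h2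
  · intro F ⟨h1, h2⟩
    apply hGneg F (by linarith)
    apply hJlt F h2
    exact qneg_right A Fu Fh F hAneg (lt_trans hFuFh h1) h1
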